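/- Let p be an odd prime and a, b, c integers with p | c, p ∤ ab, and a ≡ -b (mod p). Then for every k ≥ 1 there exist integers x, y, z with p ∤ x such that ax² + by² + cz² ≡ 0 (mod p^k). -/

import Mathlib

/-- If `p` is an odd prime, `p ∣ c`, `p ∤ ab`, and `a ≡ -b (mod p)`, then the form
`ax² + by² + cz²` has zeros mod every power of `p` with `p ∤ x`. -/
theorem primitive_zero_mod_p_pow (p : ℕ) (hp : p.Prime) (hodd : Odd p) (a b c : ℤ)
    (hc : (p : ℤ) ∣ c) (hab : ¬ (p : ℤ) ∣ a * b) (hcong : a ≡ -b [ZMOD (p : ℤ)]) :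
    ∀ k : ℕ, 1 ≤ k → ∃ x y z : ℤ, ¬ (p : ℤ) ∣ x ∧
      (p : ℤ) ^ k ∣ (a * x ^ 2 + b * y ^ 2 + c * z ^ 2) := by
  have hpa : ¬ (p : ℤ) ∣ a := fun h => hab (h.mul_right b)
  have hpb : ¬ (p : ℤ) ∣ b := fun h => hab (h.mul_left a)
  have hp2 : ¬ (p : ℤ) ∣ 2 := by
    intro h
    have h2 : p ∣ 2 := by exact_mod_cast h
    rcases (Nat.prime_two.eq_one_or_self_of_dvd p h2) with h | h
    · exact hp.one_lt.ne' h
    · rw [h] at hodd; simp [Nat.odd_iff] at hodd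
  have hfact : Fact p.Prime := ⟨hp⟩
  -- key : ∃ x, ¬ p ∣ x ∧ p^k ∣ a x² + b
  have key : ∀ k : ℕ, 1 ≤ k → ∃ x : ℤ, ¬ (p : ℤ) ∣ x ∧ (p : ℤ) ^ k ∣ (a * x ^ 2 + b) := by
    intro k hk
    induction k, hk using Nat.le_induction with
    | base =>
      refine ⟨1, fun h => by have := Int.le_of_dvd one_pos h; have := hp.one_lt; omega, ?_⟩
      have : (p : ℤ) ∣ -b - a := hcong.dvd
      have : (p : ℤ) ∣ a + b := by
        have := dvd_neg.mpr this; simpa [neg_sub, sub_neg_eq_add, add_comm] using this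
      simpa using this
    | succ k hk ih =>
      obtain ⟨x, hx, hdvd⟩ := ih
      obtain ⟨m, hm⟩ := hdvd
      -- find t with p ∣ m + 2*a*x*t
      have hu : ((2 * a * x : ℤ) : ZMod p) ≠ 0 := by
        rw [Ne, ZMod.intCast_zmod_eq_zero_iff_dvd]
        intro h
        rcases (Nat.prime_iff_prime_int.mp hp).dvd_mul.mp h with h | h
        · rcases (Nat.prime_iff_prime_int.mp hp).dvd_mul.mp h with h | h
          · exact hp2 h
          · exact hpa h
        · exact hx h
      set s : ZMod p := (-(m : ZMod p)) * ((2 * a * x : ℤ) : ZMod p)⁻¹ with hs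
      set t : ℤ := (s.val : ℤ) with ht
      have hts : ((t : ZMod p)) = s := by
        simp [ht, ZMod.natCast_val, ZMod.intCast_cast, ZMod.cast_id]
      have hsolve : (p : ℤ) ∣ m + 2 * a * x * t := by
        rw [← ZMod.intCast_zmod_eq_zero_iff_dvd]
        push_cast
        rw [hts]
        have hu' : 2 * (a : ZMod p) * (x : ZMod p) ≠ 0 := by push_cast at hu; convert hu using 2
        have hC : (2 * (a : ZMod p) * (x : ZMod p)) * s = -(m : ZMod p) := by
          have h2 : (2 * (a : ZMod p) * (x : ZMod p)) = ((2 * a * x : ℤ) : ZMod p) := by push_cast; ring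
          rw [hs, h2, mul_comm, mul_assoc, inv_mul_cancel₀ hu, mul_one]
        linear_combination hC
      refine ⟨x + t * (p : ℤ) ^ k, ?_, ?_⟩
      · intro h
        apply hx
        have : (p : ℤ) ∣ t * (p : ℤ) ^ k := Dvd.dvd.mul_left (dvd_pow_self _ (by omega)) t
        have := h.sub this
        simpa using this
      · have expand : a * (x + t * (p : ℤ) ^ k) ^ 2 + b
            = (p : ℤ) ^ k * (m + 2 * a * x * t) + a * t ^ 2 * ((p : ℤ) ^ k * (p : ℤ) ^ k) := by
          ring_nf
          linear_combination hm
        rw [expand]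
        apply dvd_add
        · rw [pow_succ]
          exact mul_dvd_mul_left _ hsolve
        · refine Dvd.dvd.mul_left ?_ _
          calc (p : ℤ) ^ (k + 1) ∣ (p : ℤ) ^ (k + k) := pow_dvd_pow _ (by omega)
            _ = (p : ℤ) ^ k * (p : ℤ) ^ k := by rw [pow_add]
  intro k hk
  obtain ⟨x, hx, hdvd⟩ := key k hk
  exact ⟨x, 1, 0, hx, by simpa using hdvd⟩
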